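/- Let f : ℝⁿ → ℝᵐ be differentiable with Jacobian J at x, let G_Y be symmetric positive definite on ℝᵐ, let L = L̄ ∘ f with L̄ differentiable, set g = ∇L̄(f(x)), and assume J has rank n. Let G_X = Jᵀ G_Y J and dx = -G_X⁻¹ Jᵀ g. Then J dx = -P (G_Y⁻¹ g), where P is the G_Y-orthogonal projection onto the column space of J. -/
import Mathlib


open Matrix

theorem pushforward_natural_gradient {n m : ℕ}
    (f : EuclideanSpace ℝ (Fin n) → EuclideanSpace ℝ (Fin m))
    (x : EuclideanSpace ℝ (Fin n))
    (J : Matrix (Fin m) (Fin n) ℝ)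
    (hf : HasFDerivAt f ((Matrix.toEuclideanLin J).toContinuousLinearMap) x)
    (hJ : Function.Injective J.mulVec)
    (GY : Matrix (Fin m) (Fin m) ℝ) (hGY : GY.PosDef)
    (Lbar : EuclideanSpace ℝ (Fin m) → ℝ) (hLbar : Differentiable ℝ Lbar)
    (L : EuclideanSpace ℝ (Fin n) → ℝ) (hL : L = fun x => Lbar (f x))
    (g : Fin m → ℝ) (hg : g = WithLp.equiv 2 (Fin m → ℝ) (gradient Lbar (f x))) :
    let GX : Matrix (Fin n) (Fin n) ℝ := Jᵀ * GY * J
    let dx : Fin n → ℝ := -(GX⁻¹ *ᵥ (Jᵀ *ᵥ g))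
    let P : Matrix (Fin m) (Fin m) ℝ := J * (Jᵀ * GY * J)⁻¹ * Jᵀ * GY
    J *ᵥ dx = -(P *ᵥ (GY⁻¹ *ᵥ g)) := by
  intro GX dx P
  have h1 : GY * GY⁻¹ = 1 := Matrix.mul_nonsing_inv _ (isUnit_iff_ne_zero.mpr hGY.det_pos.ne')
  have h2 : P * GY⁻¹ = J * GX⁻¹ * Jᵀ := by
    show J * (Jᵀ * GY * J)⁻¹ * Jᵀ * GY * GY⁻¹ = _
    rw [mul_assoc, h1, mul_one]
  have : P *ᵥ (GY⁻¹ *ᵥ g) = J *ᵥ (GX⁻¹ *ᵥ (Jᵀ *ᵥ g)) := by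
    rw [Matrix.mulVec_mulVec, h2, Matrix.mulVec_mulVec, Matrix.mulVec_mulVec]
  rw [show dx = -(GX⁻¹ *ᵥ (Jᵀ *ᵥ g)) from rfl, Matrix.mulVec_neg, this]
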